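/- Let 0 ≤ d < 1 and 0 ≤ i < 1 be real numbers. There exist constants 0 < c ≤ C such that for every integer n ≥ 2, c · √n ≤ G(n;i,d) ≤ C · √n, where G(n;i,d) := ∑_{q=1}^{n−1} (q^{−i} / H_{n−1}(i)) · M_{1/2}(q,d). (This is the case 0 ≤ d < 1, 0 ≤ i < 1 of the paper's quantity G(i,d), the expected value of √r_k over the joint node-influence/data-destination distribution, which satisfies G = Θ(n^{1/2}) in this regime and drives the Θ(n²) traffic load of the Metcalfe case.) -/

import Mathlib

open Real Finset

-- Bernoulli consequence: (x-1)^p ≤ x^p - p * x^(p-1) for x ≥ 1, 0 < p ≤ 1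
lemma bern {x p : ℝ} (hx : 1 ≤ x) (hp0 : 0 < p) (hp1 : p ≤ 1) :
    (x - 1) ^ p ≤ x ^ p - p * x ^ (p - 1) := by
  have hx0 : (0:ℝ) < x := lt_of_lt_of_le one_pos hx
  have hs : -1 ≤ -1 / x := by
    rw [neg_div, neg_le_neg_iff]
    rw [div_le_one hx0]; exact hx
  have h0 : 0 ≤ 1 + -1 / x := by linarith
  have hb := rpow_one_add_le_one_add_mul_self hs hp0.le hp1
  have h1 : x - 1 = x * (1 + -1 / x) := by field_simp; ring
  have h2 : x ^ (p - 1) = x ^ p / x := by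
    rw [Real.rpow_sub hx0, Real.rpow_one]
  calc (x - 1) ^ p = x ^ p * (1 + -1 / x) ^ p := by
        rw [h1, Real.mul_rpow hx0.le h0]
    _ ≤ x ^ p * (1 + p * (-1 / x)) :=
        mul_le_mul_of_nonneg_left hb (Real.rpow_nonneg hx0.le p)
    _ = x ^ p - p * x ^ (p - 1) := by rw [h2]; field_simp; ring

lemma sum_neg_rpow_le (d : ℝ) (hd0 : 0 ≤ d) (hd1 : d < 1) (q : ℕ) :
    ∑ r ∈ Finset.Icc 1 q, (r : ℝ) ^ (-d) ≤ (q : ℝ) ^ (1 - d) / (1 - d) := by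
  have hp : (0:ℝ) < 1 - d := by linarith
  rw [le_div_iff₀ hp]
  have key : ∀ k : ℕ, ((1 + k : ℕ) : ℝ) ^ (-d) * (1 - d)
      ≤ ((k + 1 : ℕ) : ℝ) ^ (1 - d) - ((k : ℕ) : ℝ) ^ (1 - d) := by
    intro k
    have hk0 : (0:ℝ) ≤ (k : ℝ) := Nat.cast_nonneg k
    have hx : (1:ℝ) ≤ ((k : ℝ) + 1) := by linarith
    have hb := bern hx hp (by linarith)
    have e1 : ((k : ℝ) + 1) - 1 = (k : ℝ) := by ring
    have e2 : (1 - d) - 1 = -d := by ring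
    rw [e1, e2] at hb
    push_cast
    have e3 : (1:ℝ) + (k:ℝ) = (k:ℝ) + 1 := by ring
    rw [e3]
    nlinarith [hb]
  calc (∑ r ∈ Finset.Icc 1 q, (r : ℝ) ^ (-d)) * (1 - d)
      = ∑ r ∈ Finset.Icc 1 q, (r : ℝ) ^ (-d) * (1 - d) := by rw [Finset.sum_mul]
    _ = ∑ k ∈ Finset.range q, ((1 + k : ℕ) : ℝ) ^ (-d) * (1 - d) := by
        rw [← Finset.Ico_add_one_right_eq_Icc, Finset.sum_Ico_eq_sum_range]; simp
    _ ≤ ∑ k ∈ Finset.range q, (((k + 1 : ℕ) : ℝ) ^ (1 - d) - ((k : ℕ) : ℝ) ^ (1 - d)) :=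
        Finset.sum_le_sum fun k _ => key k
    _ = ((q : ℕ) : ℝ) ^ (1 - d) - ((0 : ℕ) : ℝ) ^ (1 - d) :=
        Finset.sum_range_sub (fun k : ℕ => ((k : ℕ) : ℝ) ^ (1 - d)) q
    _ = (q : ℝ) ^ (1 - d) := by
        rw [Nat.cast_zero, Real.zero_rpow (by linarith : (1:ℝ) - d ≠ 0)]; ring

lemma sum_rpow_ge (e : ℝ) (he : 0 ≤ e) (m : ℕ) (hm : 1 ≤ m) :
    (m : ℝ) ^ (3 / 2 - e) / 2 ≤ ∑ r ∈ Finset.Icc 1 m, (r : ℝ) ^ (1 / 2 - e) := by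
  have hm0 : (0:ℝ) < (m : ℝ) := by exact_mod_cast hm
  have key : ∀ r ∈ Finset.Icc 1 m,
      (r : ℝ) * ((m : ℝ) ^ (-(1/2) : ℝ) * (m : ℝ) ^ (-e)) ≤ (r : ℝ) ^ (1 / 2 - e) := by
    intro r hr
    simp only [Finset.mem_Icc] at hr
    have hr0 : (0:ℝ) < (r : ℝ) := by exact_mod_cast hr.1
    have hrm : (r : ℝ) ≤ (m : ℝ) := by exact_mod_cast hr.2
    have h1 : (r : ℝ) ^ (1 / 2 - e) = (r : ℝ) ^ ((1:ℝ)/2) * (r : ℝ) ^ (-e) := by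
      rw [← Real.rpow_add hr0]; ring_nf
    have h2 : (r : ℝ) * (m : ℝ) ^ (-(1/2) : ℝ) ≤ (r : ℝ) ^ ((1:ℝ)/2) := by
      rw [Real.rpow_neg hm0.le, mul_inv_le_iff₀ (Real.rpow_pos_of_pos hm0 _)]
      have hrr : (r : ℝ) ^ ((1:ℝ)/2) * (r : ℝ) ^ ((1:ℝ)/2) = (r : ℝ) := by
        rw [← Real.rpow_add hr0]; norm_num
      calc (r : ℝ) = (r : ℝ) ^ ((1:ℝ)/2) * (r : ℝ) ^ ((1:ℝ)/2) := hrr.symm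
        _ ≤ (r : ℝ) ^ ((1:ℝ)/2) * (m : ℝ) ^ ((1:ℝ)/2) := by
            apply mul_le_mul_of_nonneg_left _ (Real.rpow_nonneg hr0.le _)
            exact Real.rpow_le_rpow hr0.le hrm (by norm_num)
    have h3 : (m : ℝ) ^ (-e) ≤ (r : ℝ) ^ (-e) := by
      rw [Real.rpow_neg hm0.le, Real.rpow_neg hr0.le]
      apply inv_anti₀ (Real.rpow_pos_of_pos hr0 _)
      exact Real.rpow_le_rpow hr0.le hrm he
    rw [h1, ← mul_assoc]
    exact mul_le_mul h2 h3 (Real.rpow_nonneg hm0.le _) (Real.rpow_nonneg hr0.le _)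
  have hsum : ((m : ℝ) * (m : ℝ)) / 2 ≤ ∑ r ∈ Finset.Icc 1 m, (r : ℝ) := by
    have hval : ∑ r ∈ Finset.Icc 1 m, (r : ℝ) = (m : ℝ) * ((m : ℝ) + 1) / 2 := by
      have hnat : (∑ r ∈ Finset.Icc 1 m, r) * 2 = m * (m + 1) := by
        have hgauss := Finset.sum_range_id_mul_two (m + 1)
        have hIcc : ∑ r ∈ Finset.Icc 1 m, r = ∑ r ∈ Finset.range (m + 1), r := by
          rw [Finset.range_eq_Ico, ← Finset.Ico_add_one_right_eq_Icc]
          rw [Finset.sum_Ico_eq_sum_range, Finset.sum_Ico_eq_sum_range]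
          simp only [Nat.succ_sub_one, Nat.sub_zero, Nat.zero_add]
          rw [Finset.sum_range_succ']
          simp [Nat.add_comm]
        rw [hIcc, hgauss]; simp [Nat.mul_comm]
      have := congrArg (fun x : ℕ => (x : ℝ)) hnat
      push_cast at this
      linarith
    rw [hval]
    nlinarith [hm0.le]
  have hm2 : (m : ℝ) ^ (2:ℝ) = (m : ℝ) * (m : ℝ) := by
    rw [show (2:ℝ) = (1:ℝ) + 1 by norm_num, Real.rpow_add hm0, Real.rpow_one]
  have hsplit : (m : ℝ) ^ (3 / 2 - e)
      = (m : ℝ) * (m : ℝ) * ((m : ℝ) ^ (-(1/2) : ℝ) * (m : ℝ) ^ (-e)) := by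
    rw [← hm2, ← Real.rpow_add hm0, ← Real.rpow_add hm0]
    congr 1; ring
  calc (m : ℝ) ^ (3 / 2 - e) / 2
      = ((m : ℝ) * (m : ℝ) / 2) * ((m : ℝ) ^ (-(1/2) : ℝ) * (m : ℝ) ^ (-e)) := by
        rw [hsplit]; ring
    _ ≤ (∑ r ∈ Finset.Icc 1 m, (r : ℝ)) * ((m : ℝ) ^ (-(1/2) : ℝ) * (m : ℝ) ^ (-e)) := by
        apply mul_le_mul_of_nonneg_right hsum
        positivity
    _ = ∑ r ∈ Finset.Icc 1 m, (r : ℝ) * ((m : ℝ) ^ (-(1/2) : ℝ) * (m : ℝ) ^ (-e)) := by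
        rw [Finset.sum_mul]
    _ ≤ ∑ r ∈ Finset.Icc 1 m, (r : ℝ) ^ (1 / 2 - e) := Finset.sum_le_sum key

/-- `H m α = ∑_{j=1}^m j^{-α}` (generalized harmonic number). -/
noncomputable def H (m : ℕ) (α : ℝ) : ℝ := ∑ j ∈ Finset.Icc 1 m, (j : ℝ) ^ (-α)

/-- Mean of `√r` under the truncated Zipf distribution with exponent `d` on `{1,…,q}`. -/
noncomputable def Mhalf (q : ℕ) (d : ℝ) : ℝ :=
  (∑ r ∈ Finset.Icc 1 q, (r : ℝ) ^ (1 / 2 - d)) / (∑ r ∈ Finset.Icc 1 q, (r : ℝ) ^ (-d))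

lemma denom_pos (d : ℝ) (q : ℕ) (hq : 1 ≤ q) :
    0 < ∑ r ∈ Finset.Icc 1 q, (r : ℝ) ^ (-d) := by
  apply Finset.sum_pos
  · intro r hr
    simp only [Finset.mem_Icc] at hr
    exact Real.rpow_pos_of_pos (by exact_mod_cast hr.1) _
  · exact Finset.nonempty_Icc.mpr hq

lemma Mhalf_le_sqrt (d : ℝ) (hd0 : 0 ≤ d) (q : ℕ) : Mhalf q d ≤ Real.sqrt q := by
  rcases Nat.eq_zero_or_pos q with rfl | hq
  · simp [Mhalf]
  have hS := denom_pos d q hq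
  have hq0 : (0:ℝ) < (q : ℝ) := by exact_mod_cast hq
  rw [Mhalf, div_le_iff₀ hS]
  have hpt : ∀ r ∈ Finset.Icc 1 q, (r : ℝ) ^ (1 / 2 - d) ≤ Real.sqrt q * (r : ℝ) ^ (-d) := by
    intro r hr
    simp only [Finset.mem_Icc] at hr
    have hr0 : (0:ℝ) < (r : ℝ) := by exact_mod_cast hr.1
    have hrq : (r : ℝ) ≤ (q : ℝ) := by exact_mod_cast hr.2
    have h1 : (r : ℝ) ^ (1 / 2 - d) = (r : ℝ) ^ ((1:ℝ)/2) * (r : ℝ) ^ (-d) := by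
      rw [← Real.rpow_add hr0]; ring_nf
    rw [h1, Real.sqrt_eq_rpow]
    apply mul_le_mul_of_nonneg_right _ (Real.rpow_nonneg hr0.le _)
    exact Real.rpow_le_rpow hr0.le hrq (by norm_num)
  calc ∑ r ∈ Finset.Icc 1 q, (r : ℝ) ^ (1 / 2 - d)
      ≤ ∑ r ∈ Finset.Icc 1 q, Real.sqrt q * (r : ℝ) ^ (-d) := Finset.sum_le_sum hpt
    _ = Real.sqrt q * ∑ r ∈ Finset.Icc 1 q, (r : ℝ) ^ (-d) := by rw [Finset.mul_sum]

lemma Mhalf_ge (d : ℝ) (hd0 : 0 ≤ d) (hd1 : d < 1) (q : ℕ) (hq : 1 ≤ q) :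
    (1 - d) / 2 * Real.sqrt q ≤ Mhalf q d := by
  have hS := denom_pos d q hq
  have hq0 : (0:ℝ) < (q : ℝ) := by exact_mod_cast hq
  have hnum := sum_rpow_ge d hd0 q hq
  have hden := sum_neg_rpow_le d hd0 hd1 q
  have hd' : (0:ℝ) < 1 - d := by linarith
  have hNnn : (0:ℝ) ≤ ∑ r ∈ Finset.Icc 1 q, (r : ℝ) ^ (1 / 2 - d) :=
    Finset.sum_nonneg fun r _ => Real.rpow_nonneg (Nat.cast_nonneg r) _
  have key : ((q : ℝ) ^ (3 / 2 - d) / 2) / ((q : ℝ) ^ (1 - d) / (1 - d)) ≤ Mhalf q d :=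
    div_le_div₀ hNnn hnum hS hden
  have heq : ((q : ℝ) ^ (3 / 2 - d) / 2) / ((q : ℝ) ^ (1 - d) / (1 - d))
      = (1 - d) / 2 * (q : ℝ) ^ ((1:ℝ)/2) := by
    have h1 : (q : ℝ) ^ (3 / 2 - d) = (q : ℝ) ^ ((1:ℝ)/2) * (q : ℝ) ^ (1 - d) := by
      rw [← Real.rpow_add hq0]; ring_nf
    have h2 : (q : ℝ) ^ (1 - d) ≠ 0 := (Real.rpow_pos_of_pos hq0 _).ne'
    rw [h1]; field_simp
  rw [Real.sqrt_eq_rpow]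
  calc (1 - d) / 2 * (q : ℝ) ^ ((1:ℝ)/2)
      = ((q : ℝ) ^ (3 / 2 - d) / 2) / ((q : ℝ) ^ (1 - d) / (1 - d)) := heq.symm
    _ ≤ Mhalf q d := key

/-- Expectation of `√r` over the joint node-influence/data-destination distribution. -/
noncomputable def G (n : ℕ) (i d : ℝ) : ℝ :=
  ∑ q ∈ Finset.Icc 1 (n - 1), ((q : ℝ) ^ (-i) / H (n - 1) i) * Mhalf q d

/-- Metcalfe case of `G`: `G(n;i,d) = Θ(√n)` for `0 ≤ d < 1`, `0 ≤ i < 1`. -/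
theorem G_metcalfe (d i : ℝ) (hd0 : 0 ≤ d) (hd1 : d < 1) (hi0 : 0 ≤ i) (hi1 : i < 1) :
    ∃ c C : ℝ, 0 < c ∧ c ≤ C ∧
      ∀ n : ℕ, 2 ≤ n →
        c * Real.sqrt n ≤ G n i d ∧ G n i d ≤ C * Real.sqrt n := by
  have hdp : (0:ℝ) < 1 - d := by linarith
  have hip : (0:ℝ) < 1 - i := by linarith
  have hcpos : (0:ℝ) < (1 - d) * (1 - i) / 8 := by positivity
  have hcle : (1 - d) * (1 - i) / 8 ≤ 1 := by
    have h := mul_le_mul (show (1:ℝ) - d ≤ 1 by linarith) (show (1:ℝ) - i ≤ 1 by linarith)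
      hip.le zero_le_one
    linarith
  refine ⟨(1 - d) * (1 - i) / 8, 1, hcpos, hcle, ?_⟩
  intro n hn
  set m := n - 1 with hm_def
  have hm : 1 ≤ m := by omega
  have hH : 0 < H m i := denom_pos i m hm
  have hwsum : ∑ q ∈ Finset.Icc 1 m, (q : ℝ) ^ (-i) / H m i = 1 := by
    rw [← Finset.sum_div]; exact div_self hH.ne'
  have hsqrt_mono : ∀ q ∈ Finset.Icc 1 m, Real.sqrt q ≤ Real.sqrt n := by
    intro q hq
    simp only [Finset.mem_Icc] at hq
    apply Real.sqrt_le_sqrt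
    have : q ≤ n := le_trans hq.2 (by omega)
    exact_mod_cast this
  constructor
  · -- lower bound
    have step1 : (1 - d) / 2 * Mhalf m i ≤ G n i d := by
      have hpt : ∀ q ∈ Finset.Icc 1 m, ((q : ℝ) ^ (-i) / H m i) * ((1 - d) / 2 * Real.sqrt q)
          ≤ ((q : ℝ) ^ (-i) / H m i) * Mhalf q d := by
        intro q hq
        simp only [Finset.mem_Icc] at hq
        apply mul_le_mul_of_nonneg_left (Mhalf_ge d hd0 hd1 q hq.1)
        have : (0:ℝ) < (q:ℝ) := by exact_mod_cast hq.1
        positivity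
      have h2 : ∑ q ∈ Finset.Icc 1 m, ((q : ℝ) ^ (-i) / H m i) * ((1 - d) / 2 * Real.sqrt q)
          = (1 - d) / 2 * Mhalf m i := by
        have hterm : ∀ q ∈ Finset.Icc 1 m,
            ((q : ℝ) ^ (-i) / H m i) * ((1 - d) / 2 * Real.sqrt q)
            = (1 - d) / 2 * ((q : ℝ) ^ (1 / 2 - i) / H m i) := by
          intro q hq
          simp only [Finset.mem_Icc] at hq
          have hq0 : (0:ℝ) < (q:ℝ) := by exact_mod_cast hq.1
          have hqs : (q : ℝ) ^ (-i) * Real.sqrt q = (q : ℝ) ^ (1 / 2 - i) := by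
            rw [Real.sqrt_eq_rpow, ← Real.rpow_add hq0]; ring_nf
          calc ((q : ℝ) ^ (-i) / H m i) * ((1 - d) / 2 * Real.sqrt q)
              = (1 - d) / 2 * (((q : ℝ) ^ (-i) * Real.sqrt q) / H m i) := by ring
            _ = (1 - d) / 2 * ((q : ℝ) ^ (1 / 2 - i) / H m i) := by rw [hqs]
        rw [Finset.sum_congr rfl hterm, ← Finset.mul_sum, ← Finset.sum_div]
        rfl
      calc (1 - d) / 2 * Mhalf m i
          = ∑ q ∈ Finset.Icc 1 m, ((q : ℝ) ^ (-i) / H m i) * ((1 - d) / 2 * Real.sqrt q) :=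
            h2.symm
        _ ≤ ∑ q ∈ Finset.Icc 1 m, ((q : ℝ) ^ (-i) / H m i) * Mhalf q d :=
            Finset.sum_le_sum hpt
        _ = G n i d := rfl
    have step2 : (1 - i) / 2 * Real.sqrt m ≤ Mhalf m i := Mhalf_ge i hi0 hi1 m hm
    have step3 : Real.sqrt n ≤ 2 * Real.sqrt m := by
      have h4m : (n : ℝ) ≤ 4 * m := by
        have : n ≤ 4 * m := by omega
        exact_mod_cast this
      calc Real.sqrt n ≤ Real.sqrt (4 * m) := Real.sqrt_le_sqrt h4m
        _ = 2 * Real.sqrt m := by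
          rw [show (4 : ℝ) * m = 2 ^ 2 * m by norm_num, Real.sqrt_mul (by positivity),
            Real.sqrt_sq (by norm_num : (0:ℝ) ≤ 2)]
    calc (1 - d) * (1 - i) / 8 * Real.sqrt n
        ≤ (1 - d) * (1 - i) / 8 * (2 * Real.sqrt m) :=
          mul_le_mul_of_nonneg_left step3 hcpos.le
      _ = (1 - d) / 2 * ((1 - i) / 2 * Real.sqrt m) := by ring
      _ ≤ (1 - d) / 2 * Mhalf m i := mul_le_mul_of_nonneg_left step2 (by linarith)
      _ ≤ G n i d := step1
  · -- upper bound
    have hpt : ∀ q ∈ Finset.Icc 1 m, ((q : ℝ) ^ (-i) / H m i) * Mhalf q d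
        ≤ ((q : ℝ) ^ (-i) / H m i) * Real.sqrt n := by
      intro q hq
      have hw : (0:ℝ) ≤ (q : ℝ) ^ (-i) / H m i := by
        simp only [Finset.mem_Icc] at hq
        have : (0:ℝ) < (q:ℝ) := by exact_mod_cast hq.1
        positivity
      exact mul_le_mul_of_nonneg_left
        ((Mhalf_le_sqrt d hd0 q).trans (hsqrt_mono q hq)) hw
    calc G n i d ≤ ∑ q ∈ Finset.Icc 1 m, ((q : ℝ) ^ (-i) / H m i) * Real.sqrt n :=
          Finset.sum_le_sum hpt
      _ = (∑ q ∈ Finset.Icc 1 m, (q : ℝ) ^ (-i) / H m i) * Real.sqrt n := by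
          rw [Finset.sum_mul]
      _ = 1 * Real.sqrt n := by rw [hwsum]
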